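/- arXiv:2508.02478 — 6 statements merged into one kernel-verified Lean document; each statement's English description precedes it below -/
import Mathlib

section
/- For any nonnegative random variable Z with E[Z] = 1, one has E[min(Z,1)] ≤ E[Z^{1/2}] ≤ √2 · (E[min(Z,1)])^{1/2}. -/
open MeasureTheory

/-- For any nonnegative random variable `Z` with `E[Z] = 1`, one has
`E[min(Z,1)] ≤ E[Z^{1/2}] ≤ √2 · (E[min(Z,1)])^{1/2}`. -/
theorem stmt_0 {Ω : Type*} [MeasurableSpace Ω] (μ : Measure Ω) [IsProbabilityMeasure μ]
    (Z : Ω → ℝ) (hZpos : ∀ ω, 0 ≤ Z ω) (hZint : Integrable Z μ)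
    (hmean : ∫ ω, Z ω ∂μ = 1) :
    (∫ ω, min (Z ω) 1 ∂μ) ≤ ∫ ω, Real.sqrt (Z ω) ∂μ ∧
      (∫ ω, Real.sqrt (Z ω) ∂μ) ≤ Real.sqrt 2 * Real.sqrt (∫ ω, min (Z ω) 1 ∂μ) := by
  have hZm := hZint.aestronglyMeasurable
  have hmin : Integrable (fun ω => min (Z ω) 1) μ := hZint.inf (integrable_const 1)
  have hmax : Integrable (fun ω => max (Z ω) 1) μ := hZint.sup (integrable_const 1)
  have hsqrt_le : ∀ ω, Real.sqrt (Z ω) ≤ Z ω + 1 := by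
    intro ω
    have h1 := Real.sq_sqrt (hZpos ω)
    have h2 := Real.sqrt_nonneg (Z ω)
    nlinarith [sq_nonneg (Real.sqrt (Z ω) - 1)]
  have hsqrtint : Integrable (fun ω => Real.sqrt (Z ω)) μ := by
    refine (hZint.add (integrable_const 1)).mono
      (Real.continuous_sqrt.comp_aestronglyMeasurable hZm) ?_
    filter_upwards with ω
    rw [Real.norm_of_nonneg (Real.sqrt_nonneg _)]
    calc Real.sqrt (Z ω) ≤ Z ω + 1 := hsqrt_le ω
      _ ≤ ‖Z ω + 1‖ := le_abs_self _
  have hminnn : ∀ ω, 0 ≤ min (Z ω) 1 := fun ω => le_min (hZpos ω) zero_le_one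
  have hmaxnn : ∀ ω, (0:ℝ) ≤ max (Z ω) 1 := fun ω => le_trans zero_le_one (le_max_right _ _)
  have hIminnn : 0 ≤ ∫ ω, min (Z ω) 1 ∂μ := integral_nonneg hminnn
  constructor
  · refine integral_mono hmin hsqrtint fun ω => ?_
    rcases le_total (Z ω) 1 with h | h
    · rw [min_eq_left h]
      nlinarith [Real.sq_sqrt (hZpos ω), Real.sqrt_nonneg (Z ω)]
    · rw [min_eq_right h]
      exact Real.one_le_sqrt.mpr h
  · -- Cauchy-Schwarz
    set f : Ω → ℝ := fun ω => Real.sqrt (min (Z ω) 1)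
    set g : Ω → ℝ := fun ω => Real.sqrt (max (Z ω) 1)
    have hfm : AEStronglyMeasurable f μ :=
      Real.continuous_sqrt.comp_aestronglyMeasurable (hZm.inf aestronglyMeasurable_const)
    have hgm : AEStronglyMeasurable g μ :=
      Real.continuous_sqrt.comp_aestronglyMeasurable (hZm.sup aestronglyMeasurable_const)
    have hf2 : ∀ ω, f ω ^ (2:ℝ) = min (Z ω) 1 := fun ω => by
      rw [Real.rpow_two, Real.sq_sqrt (hminnn ω)]
    have hg2 : ∀ ω, g ω ^ (2:ℝ) = max (Z ω) 1 := fun ω => by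
      rw [Real.rpow_two, Real.sq_sqrt (hmaxnn ω)]
    have hfmem : MemLp f 2 μ := by
      rw [memLp_two_iff_integrable_sq hfm]
      refine hmin.congr (Filter.Eventually.of_forall fun ω => ?_)
      show Z ω ⊓ 1 = f ω ^ 2
      rw [sq, Real.mul_self_sqrt (hminnn ω)]
    have hgmem : MemLp g 2 μ := by
      rw [memLp_two_iff_integrable_sq hgm]
      refine hmax.congr (Filter.Eventually.of_forall fun ω => ?_)
      show Z ω ⊔ 1 = g ω ^ 2
      rw [sq, Real.mul_self_sqrt (hmaxnn ω)]
    have hfg : ∀ ω, Real.sqrt (Z ω) = f ω * g ω := fun ω => by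
      rw [← Real.sqrt_mul (hminnn ω), min_mul_max, mul_one]
    have hCS := integral_mul_le_Lp_mul_Lq_of_nonneg (Real.HolderConjugate.two_two : Real.HolderConjugate 2 2) (f := f) (g := g)
      (Filter.Eventually.of_forall fun ω => Real.sqrt_nonneg _)
      (Filter.Eventually.of_forall fun ω => Real.sqrt_nonneg _)
      (by rw [show ENNReal.ofReal (2:ℝ) = 2 by norm_num]; exact hfmem)
      (by rw [show ENNReal.ofReal (2:ℝ) = 2 by norm_num]; exact hgmem)
    simp_rw [hf2, hg2] at hCS
    have hintmax : ∫ ω, max (Z ω) 1 ∂μ ≤ 2 := by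
      have : ∫ ω, (Z ω + 1) ∂μ = 2 := by
        rw [integral_add hZint (integrable_const 1), hmean]
        norm_num
      calc ∫ ω, max (Z ω) 1 ∂μ ≤ ∫ ω, (Z ω + 1) ∂μ := by
            refine integral_mono hmax (hZint.add (integrable_const 1)) fun ω => ?_
            exact max_le (by linarith [(hZpos ω)]) (by linarith [hZpos ω])
        _ = 2 := this
    calc ∫ ω, Real.sqrt (Z ω) ∂μ = ∫ ω, f ω * g ω ∂μ := by simp_rw [hfg]
      _ ≤ (∫ ω, min (Z ω) 1 ∂μ) ^ (1/(2:ℝ)) * (∫ ω, max (Z ω) 1 ∂μ) ^ (1/(2:ℝ)) := hCS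
      _ ≤ (∫ ω, min (Z ω) 1 ∂μ) ^ (1/(2:ℝ)) * (2:ℝ) ^ (1/(2:ℝ)) := by
            refine mul_le_mul_of_nonneg_left ?_ (Real.rpow_nonneg hIminnn _)
            exact Real.rpow_le_rpow (integral_nonneg hmaxnn) hintmax (by norm_num)
      _ = Real.sqrt 2 * Real.sqrt (∫ ω, min (Z ω) 1 ∂μ) := by
            rw [← Real.sqrt_eq_rpow, ← Real.sqrt_eq_rpow, mul_comm]
end

section
/- For any nonnegative random variable Z with E[Z] = 1, any γ ∈ (0,1), and any event A, one has E[Z^γ] ≤ P(A)^{1-γ} + (E[Z·1_{A^c}])^γ. -/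
open MeasureTheory

private lemma holder_aux {Ω : Type*} [MeasurableSpace Ω] (μ : Measure Ω)
    {f : Ω → ENNReal} (hf : Measurable f) {γ : ℝ} (hγ : γ ∈ Set.Ioo (0:ℝ) 1)
    (S : Set Ω) :
    ∫⁻ x in S, f x ^ γ ∂μ ≤ (∫⁻ x in S, f x ∂μ) ^ γ * (μ S) ^ (1 - γ) := by
  obtain ⟨hγ0, hγ1⟩ := hγ
  have hconj : Real.HolderConjugate (1/γ) (1/(1-γ)) :=
    Real.holderConjugate_one_div hγ0 (by linarith) (by ring)
  have := ENNReal.lintegral_mul_le_Lp_mul_Lq (μ.restrict S) hconj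
    (f := fun x => f x ^ γ) (g := fun _ => 1)
    ((hf.pow_const γ).aemeasurable) aemeasurable_const
  simpa [← ENNReal.rpow_natCast, ← ENNReal.rpow_mul, mul_one_div_cancel hγ0.ne',
    one_div, inv_inv, mul_inv_cancel₀ hγ0.ne', ENNReal.rpow_one,
    ENNReal.one_rpow, Measure.restrict_apply_univ] using this

/-- For any nonnegative random variable `Z` with `E[Z] = 1`, any `γ ∈ (0,1)`, and any event
`A`, one has `E[Z^γ] ≤ P(A)^{1-γ} + (E[Z·1_{A^c}])^γ`. -/
theorem stmt_2 {Ω : Type*} [MeasurableSpace Ω] (μ : Measure Ω) [IsProbabilityMeasure μ]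
    (Z : Ω → ℝ) (hZpos : ∀ ω, 0 ≤ Z ω) (hZmeas : Measurable Z) (hZint : Integrable Z μ)
    (hmean : ∫ ω, Z ω ∂μ = 1)
    (γ : ℝ) (hγ : γ ∈ Set.Ioo (0:ℝ) 1) (A : Set Ω) (hA : MeasurableSet A) :
    (∫ ω, (Z ω) ^ γ ∂μ) ≤ (μ A).toReal ^ (1 - γ) + (∫ ω in Aᶜ, Z ω ∂μ) ^ γ := by
  obtain ⟨hγ0, hγ1⟩ := hγ
  set f : Ω → ENNReal := fun ω => ENNReal.ofReal (Z ω) with hf_def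
  have hfm : Measurable f := ENNReal.measurable_ofReal.comp hZmeas
  have hnn : 0 ≤ᵐ[μ] Z := Filter.Eventually.of_forall hZpos
  -- total lintegral equals 1
  have h1 : ∫⁻ ω, f ω ∂μ = 1 := by
    have := ofReal_integral_eq_lintegral_ofReal hZint hnn
    rw [hmean] at this
    simpa using this.symm
  have hAc : ∫⁻ ω in Aᶜ, f ω ∂μ ≤ 1 := h1 ▸ setLIntegral_le_lintegral _ _
  have hAp : ∫⁻ ω in A, f ω ∂μ ≤ 1 := h1 ▸ setLIntegral_le_lintegral _ _
  -- lintegral estimate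
  have hmain : ∫⁻ ω, f ω ^ γ ∂μ ≤ μ A ^ (1 - γ) + (∫⁻ ω in Aᶜ, f ω ∂μ) ^ γ := by
    rw [← lintegral_add_compl (fun ω => f ω ^ γ) hA]
    gcongr
    · calc ∫⁻ ω in A, f ω ^ γ ∂μ ≤ (∫⁻ ω in A, f ω ∂μ) ^ γ * μ A ^ (1 - γ) :=
            holder_aux μ hfm ⟨hγ0, hγ1⟩ A
        _ ≤ 1 * μ A ^ (1 - γ) := by
            gcongr
            exact ENNReal.rpow_le_one hAp hγ0.le
        _ = μ A ^ (1 - γ) := one_mul _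
    · calc ∫⁻ ω in Aᶜ, f ω ^ γ ∂μ ≤ (∫⁻ ω in Aᶜ, f ω ∂μ) ^ γ * μ Aᶜ ^ (1 - γ) :=
            holder_aux μ hfm ⟨hγ0, hγ1⟩ Aᶜ
        _ ≤ (∫⁻ ω in Aᶜ, f ω ∂μ) ^ γ * 1 := by
            gcongr
            exact ENNReal.rpow_le_one prob_le_one (by linarith)
        _ = (∫⁻ ω in Aᶜ, f ω ∂μ) ^ γ := mul_one _
  -- convert to Bochner integrals
  have hL : ∫ ω, (Z ω) ^ γ ∂μ = (∫⁻ ω, f ω ^ γ ∂μ).toReal := by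
    rw [integral_eq_lintegral_of_nonneg_ae
      (Filter.Eventually.of_forall fun ω => Real.rpow_nonneg (hZpos ω) γ)
      (hZmeas.pow_const γ).aestronglyMeasurable]
    congr 1
    apply lintegral_congr
    intro ω
    rw [← ENNReal.ofReal_rpow_of_nonneg (hZpos ω) hγ0.le]
  have hR : ∫ ω in Aᶜ, Z ω ∂μ = (∫⁻ ω in Aᶜ, f ω ∂μ).toReal := by
    rw [integral_eq_lintegral_of_nonneg_ae
      (ae_restrict_of_ae (Filter.Eventually.of_forall hZpos)) hZmeas.aestronglyMeasurable]
  have hfin1 : μ A ^ (1 - γ) ≠ ⊤ :=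
    (ENNReal.rpow_lt_top_of_nonneg (by linarith) (measure_ne_top μ A)).ne
  have hfin2 : (∫⁻ ω in Aᶜ, f ω ∂μ) ^ γ ≠ ⊤ :=
    (ENNReal.rpow_lt_top_of_nonneg hγ0.le (ne_top_of_le_ne_top ENNReal.one_ne_top hAc)).ne
  rw [hL, hR]
  calc (∫⁻ ω, f ω ^ γ ∂μ).toReal
      ≤ (μ A ^ (1 - γ) + (∫⁻ ω in Aᶜ, f ω ∂μ) ^ γ).toReal :=
        ENNReal.toReal_mono (by simp [ENNReal.add_ne_top, hfin1, hfin2]) hmain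
    _ = (μ A).toReal ^ (1 - γ) + (∫⁻ ω in Aᶜ, f ω ∂μ).toReal ^ γ := by
        rw [ENNReal.toReal_add hfin1 hfin2, ENNReal.toReal_rpow, ENNReal.toReal_rpow]
end

section
/- For any nonnegative random variable Z, E[min(Z,1)] ≥ E[Z]^2 / (1 + E[Z^2]). -/
open MeasureTheory

/-- For any nonnegative random variable `Z` (with finite second moment),
`E[min(Z,1)] ≥ E[Z]² / (1 + E[Z²])`. -/
theorem stmt_3 {Ω : Type*} [MeasurableSpace Ω] (μ : Measure Ω) [IsProbabilityMeasure μ]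
    (Z : Ω → ℝ) (hZpos : ∀ ω, 0 ≤ Z ω) (hZmeas : Measurable Z)
    (hZint : Integrable Z μ) (hZ2int : Integrable (fun ω => (Z ω) ^ 2) μ) :
    (∫ ω, Z ω ∂μ) ^ 2 / (1 + ∫ ω, (Z ω) ^ 2 ∂μ) ≤ ∫ ω, min (Z ω) 1 ∂μ := by
  set f : Ω → ℝ := fun ω => min (Z ω) 1 with hf
  set g : Ω → ℝ := fun ω => max (Z ω) 1 with hg
  have hfnn : ∀ ω, 0 ≤ f ω := fun ω => le_min (hZpos ω) zero_le_one
  have hfle1 : ∀ ω, f ω ≤ 1 := fun ω => min_le_right _ _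
  have hgnn : ∀ ω, 0 ≤ g ω := fun ω => le_trans zero_le_one (le_max_right _ _)
  have hfg : ∀ ω, Z ω = f ω * g ω := by
    intro ω
    rcases le_total (Z ω) 1 with h | h
    · simp [hf, hg, min_eq_left h, max_eq_right h]
    · simp [hf, hg, min_eq_right h, max_eq_left h]
  have hfmeas : Measurable f := hZmeas.min measurable_const
  have hgmeas : Measurable g := hZmeas.max measurable_const
  have hgsq_le : ∀ ω, g ω ^ 2 ≤ 1 + Z ω ^ 2 := by
    intro ω
    rcases le_total (Z ω) 1 with h | h
    · simp only [hg, max_eq_right h]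
      nlinarith [sq_nonneg (Z ω)]
    · simp only [hg, max_eq_left h]
      nlinarith [sq_nonneg (Z ω)]
  have hfint : Integrable f μ := by
    apply Integrable.mono' (integrable_const (1 : ℝ)) hfmeas.aestronglyMeasurable
    filter_upwards with ω
    rw [Real.norm_of_nonneg (hfnn ω)]; exact hfle1 ω
  have hgsqint : Integrable (fun ω => g ω ^ 2) μ := by
    apply Integrable.mono' ((integrable_const (1:ℝ)).add hZ2int)
      ((hgmeas.pow_const 2).aestronglyMeasurable)
    filter_upwards with ω
    rw [Real.norm_of_nonneg (sq_nonneg _)]; exact hgsq_le ω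
  have hfmem : MemLp f 2 μ := by
    refine (memLp_top_of_bound hfmeas.aestronglyMeasurable 1 ?_).mono_exponent le_top
    filter_upwards with ω
    rw [Real.norm_of_nonneg (hfnn ω)]; exact hfle1 ω
  have hgmem : MemLp g 2 μ :=
    (memLp_two_iff_integrable_sq hgmeas.aestronglyMeasurable).mpr hgsqint
  have hCS : ∫ ω, Z ω ∂μ ≤
      (∫ ω, f ω ^ (2:ℝ) ∂μ) ^ (1/(2:ℝ)) * (∫ ω, g ω ^ (2:ℝ) ∂μ) ^ (1/(2:ℝ)) := by
    have hconj : Real.HolderConjugate 2 2 := Real.HolderConjugate.two_two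
    have := integral_mul_le_Lp_mul_Lq_of_nonneg hconj
      (Filter.Eventually.of_forall hfnn) (Filter.Eventually.of_forall hgnn)
      (by simpa using hfmem) (by simpa using hgmem)
    calc ∫ ω, Z ω ∂μ = ∫ ω, f ω * g ω ∂μ := by
          exact integral_congr_ae (Filter.Eventually.of_forall hfg)
      _ ≤ _ := this
  -- convert rpow forms to pow forms
  have hfrr : ∀ ω, f ω ^ (2:ℝ) = f ω ^ 2 := fun ω => Real.rpow_natCast (f ω) 2 ▸ by norm_num
  have hgrr : ∀ ω, g ω ^ (2:ℝ) = g ω ^ 2 := fun ω => Real.rpow_natCast (g ω) 2 ▸ by norm_num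
  have hfsq_le_f : ∫ ω, f ω ^ (2:ℝ) ∂μ ≤ ∫ ω, f ω ∂μ := by
    apply integral_mono_of_nonneg (Filter.Eventually.of_forall fun ω => by
      rw [hfrr ω]; exact sq_nonneg _) hfint
    filter_upwards with ω
    rw [hfrr ω, sq]
    nlinarith [hfnn ω, hfle1 ω]
  have hgsq_le_int : ∫ ω, g ω ^ (2:ℝ) ∂μ ≤ 1 + ∫ ω, Z ω ^ 2 ∂μ := by
    have : ∫ ω, g ω ^ (2:ℝ) ∂μ ≤ ∫ ω, (1 + Z ω ^ 2) ∂μ := by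
      apply integral_mono_of_nonneg (Filter.Eventually.of_forall fun ω => by
        rw [hgrr ω]; exact sq_nonneg _) ((integrable_const 1).add hZ2int)
      filter_upwards with ω
      rw [hgrr ω]; exact hgsq_le ω
    rwa [integral_add (integrable_const 1) hZ2int, integral_const, smul_eq_mul,
      probReal_univ, one_mul] at this
  have hZ2nn : 0 ≤ ∫ ω, Z ω ^ 2 ∂μ := integral_nonneg fun ω => sq_nonneg _
  have hden : (0:ℝ) < 1 + ∫ ω, Z ω ^ 2 ∂μ := by linarith
  rw [div_le_iff₀ hden]
  have hZnn : 0 ≤ ∫ ω, Z ω ∂μ := integral_nonneg hZpos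
  have hA : 0 ≤ ∫ ω, f ω ^ (2:ℝ) ∂μ :=
    integral_nonneg fun ω => by rw [hfrr ω]; exact sq_nonneg _
  have hB : 0 ≤ ∫ ω, g ω ^ (2:ℝ) ∂μ :=
    integral_nonneg fun ω => by rw [hgrr ω]; exact sq_nonneg _
  have hsq : (∫ ω, Z ω ∂μ) ^ 2 ≤ (∫ ω, f ω ^ (2:ℝ) ∂μ) * (∫ ω, g ω ^ (2:ℝ) ∂μ) := by
    calc (∫ ω, Z ω ∂μ) ^ 2
        ≤ ((∫ ω, f ω ^ (2:ℝ) ∂μ) ^ (1/(2:ℝ)) * (∫ ω, g ω ^ (2:ℝ) ∂μ) ^ (1/(2:ℝ))) ^ 2 :=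
          pow_le_pow_left₀ hZnn hCS 2
      _ = _ := by
          rw [mul_pow, ← Real.rpow_natCast ((∫ ω, f ω ^ (2:ℝ) ∂μ) ^ (1/(2:ℝ))) 2,
            ← Real.rpow_natCast ((∫ ω, g ω ^ (2:ℝ) ∂μ) ^ (1/(2:ℝ))) 2,
            ← Real.rpow_mul hA, ← Real.rpow_mul hB]
          norm_num
  calc (∫ ω, Z ω ∂μ) ^ 2
      ≤ (∫ ω, f ω ^ (2:ℝ) ∂μ) * (∫ ω, g ω ^ (2:ℝ) ∂μ) := hsq
    _ ≤ (∫ ω, f ω ∂μ) * (1 + ∫ ω, Z ω ^ 2 ∂μ) := by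
        apply mul_le_mul hfsq_le_f hgsq_le_int hB
        exact integral_nonneg hfnn
end

section
/- Let α_1,…,α_K be nonnegative reals summing to 1 and Z_1,…,Z_K nonnegative random variables. Setting Z = Σ_i α_i Z_i, one has E[min(Z,1)] ≤ 2 · max_{1≤i≤K} E[min(Z_i, K)]. -/
open MeasureTheory

private lemma min_one_add (a b : ℝ) (ha : 0 ≤ a) (hb : 0 ≤ b) :
    min (a + b) 1 ≤ min a 1 + min b 1 := by
  rw [min_def, min_def, min_def]; split_ifs <;> linarith

private lemma min_one_sum {ι : Type*} (s : Finset ι) (x : ι → ℝ) (hx : ∀ i, 0 ≤ x i) :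
    min (∑ i ∈ s, x i) 1 ≤ ∑ i ∈ s, min (x i) 1 := by
  classical
  induction s using Finset.induction with
  | empty => simp
  | insert _ _ h ih =>
    rw [Finset.sum_insert h, Finset.sum_insert h]
    refine le_trans (min_one_add _ _ (hx _) (Finset.sum_nonneg fun i _ => hx i)) ?_
    linarith

private lemma min_key (Kr : ℝ) (hKr : 1 ≤ Kr) (a z : ℝ) (ha : 0 ≤ a) (hz : 0 ≤ z) :
    min (a * z) 1 ≤ (Kr⁻¹ + a) * min z Kr := by
  rcases le_total z Kr with h | h
  · rw [min_eq_left h]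
    have h1 : min (a * z) 1 ≤ a * z := min_le_left _ _
    have h0 : 0 ≤ Kr⁻¹ * z := by positivity
    nlinarith
  · rw [min_eq_right h]
    have hK0 : (0:ℝ) < Kr := by linarith
    have h1 : Kr⁻¹ * Kr = 1 := inv_mul_cancel₀ hK0.ne'
    have h0 : 0 ≤ a * Kr := by positivity
    have h2 : min (a * z) 1 ≤ 1 := min_le_right _ _
    nlinarith

/-- Let `α_1,…,α_K` be nonnegative reals summing to `1` and `Z_1,…,Z_K` nonnegative random
variables. Setting `Z = Σ_i α_i Z_i`, one has
`E[min(Z,1)] ≤ 2 · max_{1≤i≤K} E[min(Z_i, K)]`. -/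
theorem stmt_4 {Ω : Type*} [MeasurableSpace Ω] (μ : Measure Ω) [IsProbabilityMeasure μ]
    (K : ℕ) (hK : 0 < K) (α : Fin K → ℝ) (hα : ∀ i, 0 ≤ α i) (hαsum : ∑ i, α i = 1)
    (Z : Fin K → Ω → ℝ) (hZpos : ∀ i ω, 0 ≤ Z i ω) (hZmeas : ∀ i, Measurable (Z i)) :
    (∫ ω, min (∑ i, α i * Z i ω) 1 ∂μ) ≤ 2 * ⨆ i, ∫ ω, min (Z i ω) (K : ℝ) ∂μ := by
  haveI : Nonempty (Fin K) := ⟨⟨0, hK⟩⟩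
  set Kr : ℝ := (K : ℝ) with hKr
  have hKr1 : 1 ≤ Kr := by rw [hKr]; exact_mod_cast hK
  have hKr0 : (0:ℝ) < Kr := by linarith
  set E : Fin K → ℝ := fun i => ∫ ω, min (Z i ω) Kr ∂μ with hE
  set M : ℝ := ⨆ i, E i with hM
  -- integrability of min (Z i) Kr
  have hmin_nonneg : ∀ i ω, 0 ≤ min (Z i ω) Kr :=
    fun i ω => le_min (hZpos i ω) hKr0.le
  have hint : ∀ i, Integrable (fun ω => min (Z i ω) Kr) μ := by
    intro i
    refine Integrable.mono' (integrable_const Kr)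
      (((hZmeas i).min measurable_const).aestronglyMeasurable) ?_
    filter_upwards with ω
    rw [Real.norm_eq_abs, abs_of_nonneg (hmin_nonneg i ω)]
    exact min_le_right _ _
  have hEle : ∀ i, E i ≤ M := fun i => le_ciSup (Set.Finite.bddAbove (Set.finite_range E)) i
  have hE0 : ∀ i, 0 ≤ E i := fun i => integral_nonneg (fun ω => hmin_nonneg i ω)
  -- pointwise bound
  have hpt : ∀ ω, min (∑ i, α i * Z i ω) 1 ≤ ∑ i, (Kr⁻¹ + α i) * min (Z i ω) Kr := by
    intro ω
    refine le_trans (min_one_sum _ _ (fun i => mul_nonneg (hα i) (hZpos i ω))) ?_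
    exact Finset.sum_le_sum fun i _ => min_key Kr hKr1 (α i) (Z i ω) (hα i) (hZpos i ω)
  -- integrability of LHS
  have hintL : Integrable (fun ω => min (∑ i, α i * Z i ω) 1) μ := by
    refine Integrable.mono' (integrable_const (1:ℝ))
      (((Finset.measurable_sum _ fun i _ => (measurable_const.mul (hZmeas i))).min
        measurable_const).aestronglyMeasurable) ?_
    filter_upwards with ω
    rw [Real.norm_eq_abs, abs_of_nonneg (le_min
      (Finset.sum_nonneg fun i _ => mul_nonneg (hα i) (hZpos i ω)) zero_le_one)]
    exact min_le_right _ _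
  have hintR : Integrable (fun ω => ∑ i, (Kr⁻¹ + α i) * min (Z i ω) Kr) μ :=
    integrable_finset_sum _ fun i _ => (hint i).const_mul _
  calc (∫ ω, min (∑ i, α i * Z i ω) 1 ∂μ)
      ≤ ∫ ω, ∑ i, (Kr⁻¹ + α i) * min (Z i ω) Kr ∂μ :=
        integral_mono hintL hintR hpt
    _ = ∑ i, (Kr⁻¹ + α i) * E i := by
        rw [integral_finset_sum _ fun i _ => (hint i).const_mul _]
        exact Finset.sum_congr rfl fun i _ => MeasureTheory.integral_const_mul _ _
    _ ≤ ∑ i, (Kr⁻¹ + α i) * M := by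
        refine Finset.sum_le_sum fun i _ => ?_
        have : 0 ≤ Kr⁻¹ + α i := add_nonneg (inv_nonneg.mpr hKr0.le) (hα i)
        exact mul_le_mul_of_nonneg_left (hEle i) this
    _ = 2 * M := by
        rw [← Finset.sum_mul]
        congr 1
        rw [Finset.sum_add_distrib, hαsum, Finset.sum_const, Finset.card_univ,
          Fintype.card_fin, nsmul_eq_mul]
        field_simp
        ring
end

section
/- Define φ^{(0)}(v) = 1 for v ∈ (0,1) and iteratively φ^{(k)}(v) = ∫_0^1 φ^{(k-1)}(u)/(v+u) du. Then for every k ≥ 0 and every v ∈ (0,1), φ^{(k)}(v) ≤ π^k / √v. -/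
open MeasureTheory

/-- The iterates `φ^{(0)} ≡ 1`, `φ^{(k)}(v) = ∫_0^1 φ^{(k-1)}(u)/(v+u) du`. -/
noncomputable def phiIter : ℕ → ℝ → ℝ
  | 0 => fun _ => 1
  | (k + 1) => fun v => ∫ u in (0:ℝ)..1, phiIter k u / (v + u)

lemma g0_integrable {v : ℝ} (hv : 0 < v) :
    IntervalIntegrable (fun u : ℝ => 1 / (Real.sqrt u * (v + u))) volume 0 1 := by
  apply IntervalIntegrable.mono_fun' (g := fun u : ℝ => v⁻¹ * u ^ (-(1:ℝ)/2))
  · exact (intervalIntegral.intervalIntegrable_rpow' (by norm_num)).const_mul _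
  · exact (measurable_const.div
      (Real.continuous_sqrt.measurable.mul (measurable_const.add measurable_id))).aestronglyMeasurable
  · filter_upwards [ae_restrict_mem measurableSet_uIoc] with u hu
    rw [Set.uIoc_of_le (by norm_num : (0:ℝ) ≤ 1)] at hu
    obtain ⟨hu0, hu1⟩ := hu
    have hsu : 0 < Real.sqrt u := Real.sqrt_pos.2 hu0
    rw [Real.norm_eq_abs, abs_of_nonneg (by positivity)]
    have : (-(1:ℝ)/2) = -(1/2) := by norm_num
    rw [this, Real.rpow_neg hu0.le, ← Real.sqrt_eq_rpow, ← mul_inv, ← one_div, mul_comm]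
    exact one_div_le_one_div_of_le (by positivity) (by nlinarith [hsu.le, hu0.le])

lemma g0_integral_le {v : ℝ} (hv : 0 < v) :
    ∫ u in (0:ℝ)..1, 1 / (Real.sqrt u * (v + u)) ≤ Real.pi / Real.sqrt v := by
  have hsv : 0 < Real.sqrt v := Real.sqrt_pos.2 hv
  set F : ℝ → ℝ := fun u => 2 / Real.sqrt v * Real.arctan (Real.sqrt u / Real.sqrt v) with hF
  have hderiv : ∀ x ∈ Set.Ioo (0:ℝ) 1,
      HasDerivAt F (1 / (Real.sqrt x * (v + x))) x := by
    intro x hx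
    have hx0 : 0 < x := hx.1
    have hsx : 0 < Real.sqrt x := Real.sqrt_pos.2 hx0
    have hs : HasDerivAt Real.sqrt (1 / (2 * Real.sqrt x)) x := Real.hasDerivAt_sqrt hx0.ne'
    have hd : HasDerivAt (fun u => Real.sqrt u / Real.sqrt v)
        ((1 / (2 * Real.sqrt x)) / Real.sqrt v) x := hs.div_const _
    have ha := (Real.hasDerivAt_arctan (Real.sqrt x / Real.sqrt v)).comp x hd
    have := ha.const_mul (2 / Real.sqrt v)
    convert this using 1
    · rfl
    · rfl
    · rfl
    have hx2 : Real.sqrt x ^ 2 = x := Real.sq_sqrt hx0.le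
    have hv2 : Real.sqrt v ^ 2 = v := Real.sq_sqrt hv.le
    rw [← hx2, ← hv2]
    have h3 : (0:ℝ) < 1 + (Real.sqrt x / Real.sqrt v) ^ 2 := by positivity
    field_simp
    simp only [Real.sqrt_sq hsv.le, Real.sqrt_sq hsx.le]
  have hcont : ContinuousOn F (Set.Icc 0 1) :=
    (continuous_const.mul (Real.continuous_arctan.comp
      (Real.continuous_sqrt.div_const _))).continuousOn
  have heq := intervalIntegral.integral_eq_sub_of_hasDeriv_right_of_le (by norm_num : (0:ℝ) ≤ 1)
    hcont (fun x hx => (hderiv x hx).hasDerivWithinAt) (g0_integrable hv)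
  rw [heq]
  have h0 : F 0 = 0 := by simp [hF]
  have h1 : F 1 ≤ Real.pi / Real.sqrt v := by
    rw [hF]
    have := (Real.arctan_lt_pi_div_two (Real.sqrt 1 / Real.sqrt v)).le
    calc 2 / Real.sqrt v * Real.arctan (Real.sqrt 1 / Real.sqrt v)
        ≤ 2 / Real.sqrt v * (Real.pi / 2) := by
          apply mul_le_mul_of_nonneg_left this (by positivity)
      _ = Real.pi / Real.sqrt v := by ring
  linarith

/-- For every `k ≥ 0` and every `v ∈ (0,1)`, `φ^{(k)}(v) ≤ π^k / √v`. -/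
theorem stmt_8 :
    ∀ (k : ℕ) (v : ℝ), v ∈ Set.Ioo (0:ℝ) 1 →
      phiIter k v ≤ Real.pi ^ k / Real.sqrt v := by
  intro k
  induction k with
  | zero =>
    intro v hv
    have hsv : 0 < Real.sqrt v := Real.sqrt_pos.2 hv.1
    simp only [phiIter, pow_zero]
    rw [le_div_iff₀ hsv, one_mul]
    exact Real.sqrt_le_one.2 hv.2.le
  | succ k ih =>
    intro v hv
    have hv0 : 0 < v := hv.1
    have hsv : 0 < Real.sqrt v := Real.sqrt_pos.2 hv0
    have hpik : (0:ℝ) ≤ Real.pi ^ k := by positivity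
    by_cases hInt : IntervalIntegrable (fun u => phiIter k u / (v + u)) volume 0 1
    · have hg : IntervalIntegrable (fun u : ℝ => Real.pi ^ k * (1 / (Real.sqrt u * (v + u))))
          volume 0 1 := (g0_integrable hv0).const_mul _
      calc phiIter (k + 1) v = ∫ u in Set.Ioo (0:ℝ) 1, phiIter k u / (v + u) := by
            rw [show phiIter (k+1) v = ∫ u in (0:ℝ)..1, phiIter k u / (v + u) from rfl,
              intervalIntegral.integral_of_le zero_le_one, integral_Ioc_eq_integral_Ioo]
        _ ≤ ∫ u in Set.Ioo (0:ℝ) 1, Real.pi ^ k * (1 / (Real.sqrt u * (v + u))) := by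
            apply setIntegral_mono_on
            · exact hInt.1.mono_set Set.Ioo_subset_Ioc_self
            · exact hg.1.mono_set Set.Ioo_subset_Ioc_self
            · exact measurableSet_Ioo
            · intro u hu
              have hu0 : 0 < u := hu.1
              have hsu : 0 < Real.sqrt u := Real.sqrt_pos.2 hu0
              have hvu : 0 < v + u := by linarith
              have h1 : phiIter k u / (v + u) ≤ (Real.pi ^ k / Real.sqrt u) / (v + u) := by
                gcongr
                exact ih u hu
              calc phiIter k u / (v + u) ≤ (Real.pi ^ k / Real.sqrt u) / (v + u) := h1
                _ = Real.pi ^ k * (1 / (Real.sqrt u * (v + u))) := by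
                    field_simp
        _ = Real.pi ^ k * ∫ u in (0:ℝ)..1, 1 / (Real.sqrt u * (v + u)) := by
            rw [intervalIntegral.integral_of_le zero_le_one, integral_Ioc_eq_integral_Ioo,
              ← integral_const_mul]
        _ ≤ Real.pi ^ k * (Real.pi / Real.sqrt v) :=
            mul_le_mul_of_nonneg_left (g0_integral_le hv0) hpik
        _ = Real.pi ^ (k + 1) / Real.sqrt v := by rw [pow_succ]; ring
    · rw [show phiIter (k+1) v = ∫ u in (0:ℝ)..1, phiIter k u / (v + u) from rfl,
        intervalIntegral.integral_undef hInt]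
      positivity
end

section
/- Let f: (0,∞) → (0,∞) be unimodal (increasing then decreasing) with maximum at x* ∈ (0,∞), and let r > 0. Then (1/r)·Σ_{k=1}^∞ f(k/r) ≤ (⌈r⌉/r)·( Σ_{i=1}^∞ f(i) + f(x*) ), provided the right-hand side is finite. -/
/-- Let `f : (0,∞) → (0,∞)` be unimodal (nondecreasing on `(0,x*]`, nonincreasing on
`[x*,∞)`) with maximum at `x* > 0`, and let `r > 0`.  Then
`(1/r)·Σ_{k≥1} f(k/r) ≤ (⌈r⌉/r)·( Σ_{i≥1} f(i) + f(x*) )`. -/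
theorem stmt_10 (f : ℝ → ℝ) (hfpos : ∀ x, 0 < x → 0 < f x)
    (xs : ℝ) (hxs : 0 < xs)
    (hmono : MonotoneOn f (Set.Ioc 0 xs)) (hanti : AntitoneOn f (Set.Ici xs))
    (r : ℝ) (hr : 0 < r)
    (hsum1 : Summable fun k : ℕ => f (((k : ℝ) + 1) / r))
    (hsum2 : Summable fun i : ℕ => f ((i : ℝ) + 1)) :
    (1 / r) * ∑' k : ℕ, f (((k : ℝ) + 1) / r) ≤
      ((⌈r⌉₊ : ℝ) / r) * ((∑' i : ℕ, f ((i : ℝ) + 1)) + f xs) := by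
  classical
  set g : ℕ → ℝ := fun n => f ((n : ℝ) + 1) with hg
  set b : ℕ → ℝ := fun i =>
    if xs ≤ (i : ℝ) then f i else if (i : ℝ) + 1 < xs then f ((i : ℝ) + 1) else f xs with hb
  have hgpos : ∀ n : ℕ, 0 < g n := fun n => hfpos _ (by positivity)
  have hbnonneg : ∀ i : ℕ, 0 ≤ b i := by
    intro i
    simp only [hb]
    split_ifs with h1 h2
    · exact (hfpos _ (lt_of_lt_of_le hxs h1)).le
    · exact (hfpos _ (by positivity)).le
    · exact (hfpos _ hxs).le
  -- pointwise bound
  have hpt : ∀ (i : ℕ) (x : ℝ), (i : ℝ) < x → x ≤ (i : ℝ) + 1 → f x ≤ b i := by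
    intro i x h1 h2
    have hx0 : 0 < x := lt_of_le_of_lt (Nat.cast_nonneg i) h1
    simp only [hb]
    split_ifs with hB hA
    · exact hanti hB (le_trans hB h1.le) h1.le
    · exact hmono ⟨hx0, le_trans h2 hA.le⟩ ⟨by positivity, hA.le⟩ h2
    · rcases le_or_gt x xs with h | h
      · exact hmono ⟨hx0, h⟩ ⟨hxs, le_refl xs⟩ h
      · exact hanti (le_refl xs) h.le h.le
  -- sums of b over finsets
  have hsumb : ∀ T : Finset ℕ, ∑ i ∈ T, b i ≤ (∑' n : ℕ, g n) + f xs := by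
    intro T
    set T1 : Finset ℕ := T.filter (fun i => xs ≤ (i : ℝ)) with hT1
    set T' : Finset ℕ := T.filter (fun i => ¬ xs ≤ (i : ℝ)) with hT'
    set T2 : Finset ℕ := T'.filter (fun i => (i : ℝ) + 1 < xs) with hT2
    set T3 : Finset ℕ := T'.filter (fun i => ¬ (i : ℝ) + 1 < xs) with hT3
    have hsplit : ∑ i ∈ T, b i = (∑ i ∈ T1, b i) + ((∑ i ∈ T2, b i) + (∑ i ∈ T3, b i)) := by
      rw [← Finset.sum_filter_add_sum_filter_not T (fun i => xs ≤ (i : ℝ)),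
        ← Finset.sum_filter_add_sum_filter_not T' (fun i => (i : ℝ) + 1 < xs)]
    have hT1one : ∀ i ∈ T1, 1 ≤ i := by
      intro i hi
      have := (Finset.mem_filter.1 hi).2
      by_contra h
      interval_cases i
      · simp at this; linarith
    have h1 : ∑ i ∈ T1, b i = ∑ i ∈ T1, g (i - 1) := by
      refine Finset.sum_congr rfl fun i hi => ?_
      have hxi := (Finset.mem_filter.1 hi).2
      have h1i := hT1one i hi
      have hcast : ((i - 1 : ℕ) : ℝ) = (i : ℝ) - 1 := by
        push_cast [h1i]; ring
      simp only [hb, hg, if_pos hxi, hcast]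
      norm_num
    have h2 : ∑ i ∈ T2, b i = ∑ i ∈ T2, g i := by
      refine Finset.sum_congr rfl fun i hi => ?_
      have h2i := (Finset.mem_filter.1 hi).2
      have hni := (Finset.mem_filter.1 (Finset.mem_filter.1 hi).1).2
      simp only [hb, hg, if_neg hni, if_pos h2i]
    have h3 : ∑ i ∈ T3, b i ≤ f xs := by
      have hcongr : ∑ i ∈ T3, b i = ∑ i ∈ T3, f xs := by
        refine Finset.sum_congr rfl fun i hi => ?_
        have h3i := (Finset.mem_filter.1 hi).2
        have hni := (Finset.mem_filter.1 (Finset.mem_filter.1 hi).1).2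
        simp only [hb, if_neg hni, if_neg h3i]
      have hcard : T3.card ≤ 1 := by
        refine Finset.card_le_one.2 fun a ha b' hb' => ?_
        have h3a := (Finset.mem_filter.1 ha).2
        have hna := (Finset.mem_filter.1 (Finset.mem_filter.1 ha).1).2
        have h3b := (Finset.mem_filter.1 hb').2
        have hnb := (Finset.mem_filter.1 (Finset.mem_filter.1 hb').1).2
        push_neg at h3a hna h3b hnb
        have hab : (a : ℝ) < (b' : ℝ) + 1 := lt_of_lt_of_le hna h3b
        have hba : (b' : ℝ) < (a : ℝ) + 1 := lt_of_lt_of_le hnb h3a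
        have hab' : a < b' + 1 := by exact_mod_cast hab
        have hba' : b' < a + 1 := by exact_mod_cast hba
        omega
      rw [hcongr, Finset.sum_const]
      calc T3.card • f xs ≤ 1 • f xs :=
            nsmul_le_nsmul_left (hfpos _ hxs).le hcard
        _ = f xs := one_smul _ _
    have h12 : (∑ i ∈ T1, g (i - 1)) + ∑ i ∈ T2, g i ≤ ∑' n : ℕ, g n := by
      have hinj : Set.InjOn (fun i => i - 1) ↑T1 := by
        intro a ha b' hb' hab
        have := hT1one a ha
        have := hT1one b' hb'
        simp only at hab
        omega
      rw [← Finset.sum_image hinj]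
      have hdisj : Disjoint (T1.image (fun i => i - 1)) T2 := by
        rw [Finset.disjoint_left]
        rintro n hn hn2
        obtain ⟨i, hi, hin⟩ := Finset.mem_image.1 hn
        have hxi := (Finset.mem_filter.1 hi).2
        have h1i := hT1one i hi
        have h2n := (Finset.mem_filter.1 hn2).2
        have : ((n : ℝ)) + 1 = (i : ℝ) := by
          subst hin; push_cast [h1i]; ring
        rw [this] at h2n
        linarith
      rw [← Finset.sum_union hdisj]
      exact Summable.sum_le_tsum _ (fun n _ => (hgpos n).le) hsum2
    rw [hsplit, h1, h2]
    linarith [h12, h3]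
  -- main finite-sum bound
  have key : ∀ S : Finset ℕ, ∑ k ∈ S, f (((k : ℝ) + 1) / r) ≤
      (⌈r⌉₊ : ℝ) * ((∑' n : ℕ, g n) + f xs) := by
    intro S
    set I : ℕ → ℕ := fun k => ⌈((k : ℝ) + 1) / r⌉₊ - 1 with hI
    have hImem : ∀ k : ℕ, ((I k : ℝ) < ((k : ℝ) + 1) / r) ∧ ((k : ℝ) + 1) / r ≤ (I k : ℝ) + 1 := by
      intro k
      have hx0 : 0 < ((k : ℝ) + 1) / r := by positivity
      have hc1 : 1 ≤ ⌈((k : ℝ) + 1) / r⌉₊ := by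
        have := Nat.ceil_pos.mpr hx0; omega
      have hcast : (I k : ℝ) = (⌈((k : ℝ) + 1) / r⌉₊ : ℝ) - 1 := by
        simp only [hI]; push_cast [hc1]; ring
      constructor
      · rw [hcast]
        have := Nat.ceil_lt_add_one hx0.le
        linarith
      · rw [hcast]
        have := Nat.le_ceil (((k : ℝ) + 1) / r)
        linarith
    have hcard : ∀ i : ℕ, (S.filter (fun k => I k = i)).card ≤ ⌈r⌉₊ := by
      intro i
      have hsub : S.filter (fun k => I k = i) ⊆
          Finset.Ico ⌊(i : ℝ) * r⌋₊ (⌊(i : ℝ) * r⌋₊ + ⌈r⌉₊) := by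
        intro k hk
        have hIk := (Finset.mem_filter.1 hk).2
        have h1 := (hImem k).1
        have h2 := (hImem k).2
        rw [hIk] at h1 h2
        have hl : (i : ℝ) * r < (k : ℝ) + 1 := by
          rw [lt_div_iff₀ hr] at h1; linarith
        have hu : (k : ℝ) + 1 ≤ ((i : ℝ) + 1) * r := by
          rw [div_le_iff₀ hr] at h2; linarith
        have hir0 : (0 : ℝ) ≤ (i : ℝ) * r := by positivity
        refine Finset.mem_Ico.2 ⟨?_, ?_⟩
        · have hfl : (⌊(i : ℝ) * r⌋₊ : ℝ) < (k : ℝ) + 1 :=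
            lt_of_le_of_lt (Nat.floor_le hir0) hl
          have : ⌊(i : ℝ) * r⌋₊ < k + 1 := by exact_mod_cast hfl
          omega
        · have hfu : (i : ℝ) * r < (⌊(i : ℝ) * r⌋₊ : ℝ) + 1 := Nat.lt_floor_add_one _
          have hcr : r ≤ (⌈r⌉₊ : ℝ) := Nat.le_ceil r
          have : (k : ℝ) < (⌊(i : ℝ) * r⌋₊ : ℝ) + (⌈r⌉₊ : ℝ) := by nlinarith
          exact_mod_cast this
      calc (S.filter (fun k => I k = i)).card
          ≤ (Finset.Ico ⌊(i : ℝ) * r⌋₊ (⌊(i : ℝ) * r⌋₊ + ⌈r⌉₊)).card := Finset.card_le_card hsub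
        _ = ⌈r⌉₊ := by rw [Nat.card_Ico]; omega
    calc ∑ k ∈ S, f (((k : ℝ) + 1) / r)
        ≤ ∑ k ∈ S, b (I k) :=
          Finset.sum_le_sum fun k _ => hpt (I k) _ (hImem k).1 (hImem k).2
      _ = ∑ i ∈ S.image I, (S.filter (fun k => I k = i)).card • b i := Finset.sum_comp b I
      _ ≤ ∑ i ∈ S.image I, ⌈r⌉₊ • b i := by
          refine Finset.sum_le_sum fun i _ => ?_
          rw [nsmul_eq_mul, nsmul_eq_mul]
          exact mul_le_mul_of_nonneg_right (by exact_mod_cast hcard i) (hbnonneg i)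
      _ = (⌈r⌉₊ : ℝ) * ∑ i ∈ S.image I, b i := by
          rw [← Finset.smul_sum, nsmul_eq_mul]
      _ ≤ (⌈r⌉₊ : ℝ) * ((∑' n : ℕ, g n) + f xs) :=
          mul_le_mul_of_nonneg_left (hsumb _) (Nat.cast_nonneg _)
  have H : ∑' k : ℕ, f (((k : ℝ) + 1) / r) ≤ (⌈r⌉₊ : ℝ) * ((∑' n : ℕ, g n) + f xs) :=
    Summable.tsum_le_of_sum_le hsum1 key
  rw [div_mul_eq_mul_div, div_mul_eq_mul_div, one_mul]
  exact (div_le_div_iff_of_pos_right hr).mpr H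
end
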